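/- arXiv:2405.08027 — 4 statements merged into one kernel-verified Lean document; each statement's English description precedes it below -/
import Mathlib

section
/- Let N, K > 0 be real numbers, and for each integer t ≥ 1 define weights A_t = (tN + (t−1)K)/((t+1)N + tK), B_t = N/((t+1)N + tK), C_t = K/((t+1)N + tK). Let q̄₀ ∈ ℝ and let (q̄_t), (a_t) be real sequences. Fix an integer t ≥ 2 and suppose q̄_t = A_t·q̄_{t−1} + B_t·a_{t−1} + C_t·q̄₀ and q̄_{t−1} = A_{t−1}·q̄_{t−2} + B_{t−1}·a_{t−2} + C_{t−1}·q̄₀. If q̄_{t−1} > q̄_{t−2} and a_{t−1} > a_{t−2}, then q̄_t > q̄_{t−1}. -/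
/-- induction step in the proof of Theorem 1 (evolution of acceptance rate).
If `q̄_t = A_t q̄_{t-1} + B_t a_{t-1} + C_t q̄₀` and similarly at `t-1`, with
`q̄_{t-1} > q̄_{t-2}` and `a_{t-1} > a_{t-2}`, then `q̄_t > q̄_{t-1}`. -/
theorem stmt0 (N K : ℝ) (hN : 0 < N) (hK : 0 < K)
    (qbar a : ℕ → ℝ) (qbar0 : ℝ) (t : ℕ) (ht : 2 ≤ t)
    (hrec_t : qbar t =
      (((t : ℝ) * N + ((t : ℝ) - 1) * K) / (((t : ℝ) + 1) * N + (t : ℝ) * K)) * qbar (t - 1)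
      + (N / (((t : ℝ) + 1) * N + (t : ℝ) * K)) * a (t - 1)
      + (K / (((t : ℝ) + 1) * N + (t : ℝ) * K)) * qbar0)
    (hrec_t1 : qbar (t - 1) =
      ((((t : ℝ) - 1) * N + ((t : ℝ) - 2) * K) / ((t : ℝ) * N + ((t : ℝ) - 1) * K)) * qbar (t - 2)
      + (N / ((t : ℝ) * N + ((t : ℝ) - 1) * K)) * a (t - 2)
      + (K / ((t : ℝ) * N + ((t : ℝ) - 1) * K)) * qbar0)
    (hq : qbar (t - 1) > qbar (t - 2))
    (ha : a (t - 1) > a (t - 2)) :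
    qbar t > qbar (t - 1) := by
  have hx : (2:ℝ) ≤ (t:ℝ) := by exact_mod_cast ht
  have hD : 0 < ((t:ℝ)+1)*N + (t:ℝ)*K := by nlinarith
  have hD' : 0 < (t:ℝ)*N + ((t:ℝ)-1)*K := by nlinarith
  have hD'' : 0 ≤ ((t:ℝ)-1)*N + ((t:ℝ)-2)*K := by nlinarith
  have key : qbar t - qbar (t-1) =
      ((((t:ℝ)-1)*N + ((t:ℝ)-2)*K) / (((t:ℝ)+1)*N + (t:ℝ)*K)) * (qbar (t-1) - qbar (t-2))
      + (N / (((t:ℝ)+1)*N + (t:ℝ)*K)) * (a (t-1) - a (t-2)) := by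
    rw [hrec_t]
    field_simp at hrec_t1 ⊢
    nlinarith [hrec_t1]
  have h1 : 0 ≤ ((((t:ℝ)-1)*N + ((t:ℝ)-2)*K) / (((t:ℝ)+1)*N + (t:ℝ)*K)) * (qbar (t-1) - qbar (t-2)) := by
    apply mul_nonneg (div_nonneg hD'' hD.le); linarith
  have h2 : 0 < (N / (((t:ℝ)+1)*N + (t:ℝ)*K)) * (a (t-1) - a (t-2)) := by
    apply mul_pos (div_pos hN hD); linarith
  linarith
end

section
/- Let N, K > 0 be real numbers, and for each integer t ≥ 1 define A_t = (tN + (t−1)K)/((t+1)N + tK), B_t = N/((t+1)N + tK), C_t = K/((t+1)N + tK). Let q̄₀ ∈ ℝ, let a : ℕ → ℝ be strictly increasing, and let q̄ : ℕ → ℝ satisfy q̄(0) = q̄₀ and q̄(t) = A_t·q̄(t−1) + B_t·a(t−1) + C_t·q̄₀ for all t ≥ 1. If a(0) ≥ q̄₀, then q̄(1) ≥ q̄(0) and q̄(t) > q̄(t−1) for every t ≥ 2. -/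
/-- arithmetic skeleton of the lemma used to prove Theorem 1.
With the recursion `q̄_t = A_t q̄_{t-1} + B_t a_{t-1} + C_t q̄₀`, `a` strictly
increasing and `a 0 ≥ q̄₀`, we get `q̄ 1 ≥ q̄ 0` and `q̄ t > q̄ (t-1)` for `t ≥ 2`. -/
theorem stmt1 (N K : ℝ) (hN : 0 < N) (hK : 0 < K)
    (qbar0 : ℝ) (a qbar : ℕ → ℝ) (ha : StrictMono a)
    (h0 : qbar 0 = qbar0)
    (hrec : ∀ t : ℕ, 1 ≤ t → qbar t =
      (((t : ℝ) * N + ((t : ℝ) - 1) * K) / (((t : ℝ) + 1) * N + (t : ℝ) * K)) * qbar (t - 1)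
      + (N / (((t : ℝ) + 1) * N + (t : ℝ) * K)) * a (t - 1)
      + (K / (((t : ℝ) + 1) * N + (t : ℝ) * K)) * qbar0)
    (ha0 : a 0 ≥ qbar0) :
    qbar 1 ≥ qbar 0 ∧ ∀ t : ℕ, 2 ≤ t → qbar t > qbar (t - 1) := by
  set D : ℕ → ℝ := fun t => ((t : ℝ) + 1) * N + (t : ℝ) * K with hDdef
  have hDpos : ∀ t : ℕ, 0 < D t := by
    intro t
    have h1 : (0:ℝ) ≤ (t : ℝ) := Nat.cast_nonneg t
    simp only [hDdef]
    nlinarith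
  set E : ℕ → ℝ := fun t => N * (a t - qbar t) + K * (qbar0 - qbar t) with hEdef
  have hdiff : ∀ t : ℕ, 1 ≤ t → qbar t - qbar (t - 1) = E (t - 1) / D t := by
    intro t ht
    have hd : D t ≠ 0 := ne_of_gt (hDpos t)
    rw [hrec t ht]
    simp only [hEdef, hDdef] at hd ⊢
    field_simp
    ring
  have hEstep : ∀ t : ℕ, 1 ≤ t →
      E t = E (t - 1) + N * (a t - a (t - 1)) - (N + K) * (E (t - 1) / D t) := by
    intro t ht
    have h := hdiff t ht
    have : E t = E (t - 1) + N * (a t - a (t - 1)) - (N + K) * (qbar t - qbar (t - 1)) := by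
      simp only [hEdef]; ring
    rw [this, h]
  have hE0 : 0 ≤ E 0 := by
    simp only [hEdef, h0]
    nlinarith
  have hEpos : ∀ t : ℕ, 0 ≤ E t ∧ (1 ≤ t → 0 < E t) := by
    intro t
    induction t with
    | zero => exact ⟨hE0, by omega⟩
    | succ n ih =>
      have hn1 : 1 ≤ n + 1 := by omega
      have hstep := hEstep (n + 1) hn1
      simp only [Nat.add_sub_cancel] at hstep
      have hDgt : N + K < D (n + 1) := by
        have h1 : (1:ℝ) ≤ ((n : ℝ) + 1) := by nlinarith [Nat.cast_nonneg (α := ℝ) n]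
        simp only [hDdef]
        push_cast
        nlinarith [Nat.cast_nonneg (α := ℝ) n]
      have haninc : a n < a (n + 1) := ha (by omega)
      have hDp := hDpos (n + 1)
      have hfrac : (N + K) * (E n / D (n + 1)) ≤ E n := by
        rw [mul_div_assoc'] at *
        rw [div_le_iff₀ hDp]
        nlinarith [ih.1]
      have hpos : 0 < E (n + 1) := by
        rw [hstep]
        nlinarith [ih.1]
      exact ⟨le_of_lt hpos, fun _ => hpos⟩
  constructor
  · have h := hdiff 1 (le_refl 1)
    have : 0 ≤ E 0 / D 1 := div_nonneg hE0 (le_of_lt (hDpos 1))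
    simp at h
    linarith
  · intro t ht
    have h := hdiff t (by omega)
    have h1 : 1 ≤ t - 1 := by omega
    have hp : 0 < E (t - 1) := (hEpos (t - 1)).2 h1
    have : 0 < E (t - 1) / D t := div_pos hp (hDpos t)
    linarith
end

section
/- Let E be a real inner product space, w ∈ E with w ≠ 0, θ ∈ ℝ, b > 0, and x ∈ E. Define f : E → ℝ by f(z) = 1 if ⟪w, z⟫ ≥ θ and f(z) = 0 otherwise, and let d(x) = max(θ − ⟪w, x⟫, 0)/‖w‖ be the distance from x to the acceptance halfspace. Then the agent's optimal utility satisfies sup_{z ∈ E} ( f(z) − b·‖z − x‖² ) = max( 1 − b·d(x)², 0 ). -/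
/-- the strategic agent's optimal utility against a linear
classifier `f(z) = 1(⟪w, z⟫ ≥ θ)` with quadratic cost `b ‖z - x‖²`:
`sup_z (f z - b ‖z - x‖²) = max (1 - b d(x)²) 0`, where
`d(x) = max (θ - ⟪w, x⟫) 0 / ‖w‖` is the distance to the acceptance halfspace. -/
theorem stmt7 {E : Type*} [NormedAddCommGroup E] [InnerProductSpace ℝ E]
    (w : E) (hw : w ≠ 0) (θ b : ℝ) (hb : 0 < b) (x : E) :
    (⨆ z : E, ((if (inner ℝ w z : ℝ) ≥ θ then (1 : ℝ) else 0) - b * ‖z - x‖ ^ 2)) =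
      max (1 - b * (max (θ - (inner ℝ w x : ℝ)) 0 / ‖w‖) ^ 2) 0 := by
  have hw' : (0:ℝ) < ‖w‖ := norm_pos_iff.mpr hw
  set d : ℝ := max (θ - (inner ℝ w x : ℝ)) 0 / ‖w‖ with hd
  have hd0 : 0 ≤ d := div_nonneg (le_max_right _ _) hw'.le
  have hbdd : BddAbove (Set.range fun z : E =>
      ((if (inner ℝ w z : ℝ) ≥ θ then (1:ℝ) else 0) - b * ‖z - x‖ ^ 2)) := by
    refine ⟨1, ?_⟩
    rintro y ⟨z, rfl⟩
    have h1 : (if (inner ℝ w z : ℝ) ≥ θ then (1:ℝ) else 0) ≤ 1 := by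
      split_ifs <;> norm_num
    have h2 : 0 ≤ b * ‖z - x‖ ^ 2 := by positivity
    simp only
    linarith
  apply le_antisymm
  · apply ciSup_le
    intro z
    by_cases hz : (inner ℝ w z : ℝ) ≥ θ
    · simp only [hz, if_pos]
      have hdz : d ≤ ‖z - x‖ := by
        rw [hd, div_le_iff₀ hw']
        have h2 : θ - (inner ℝ w x : ℝ) ≤ (inner ℝ w (z - x) : ℝ) := by
          rw [inner_sub_right]; linarith
        have h3 : (inner ℝ w (z - x) : ℝ) ≤ ‖w‖ * ‖z - x‖ := real_inner_le_norm _ _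
        exact max_le (by linarith [mul_comm ‖w‖ ‖z - x‖]) (by positivity)
      have : 1 - b * ‖z - x‖ ^ 2 ≤ 1 - b * d ^ 2 := by nlinarith [pow_le_pow_left₀ hd0 hdz 2]
      exact le_trans (by linarith) (le_max_left _ _)
    · simp only [hz, if_neg, not_false_iff]
      have h2 : 0 ≤ b * ‖z - x‖ ^ 2 := by positivity
      have := le_max_right (1 - b * d ^ 2) (0:ℝ)
      linarith
  · apply max_le
    · have hle := le_ciSup hbdd (x + d • ‖w‖⁻¹ • w)
      have hinner : (inner ℝ w (x + d • ‖w‖⁻¹ • w) : ℝ) ≥ θ := by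
        rw [inner_add_right, inner_smul_right, inner_smul_right,
          real_inner_self_eq_norm_sq]
        have : d * (‖w‖⁻¹ * ‖w‖ ^ 2) = d * ‖w‖ := by
          field_simp
        rw [this, hd, div_mul_cancel₀ _ hw'.ne']
        have := le_max_left (θ - (inner ℝ w x : ℝ)) 0
        linarith
      have hnorm : ‖x + d • ‖w‖⁻¹ • w - x‖ = d := by
        rw [add_sub_cancel_left, norm_smul, norm_smul, norm_inv, norm_norm,
          Real.norm_of_nonneg hd0]
        field_simp
      simp only [hinner, if_pos, ge_iff_le, le_refl, hnorm] at hle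
      calc 1 - b * d ^ 2 ≤ _ := le_of_eq rfl
        _ ≤ _ := hle
    · have hle := le_ciSup hbdd x
      have h1 : (0:ℝ) ≤ (if (inner ℝ w x : ℝ) ≥ θ then (1:ℝ) else 0) := by
        split_ifs <;> norm_num
      simp only [sub_self, norm_zero] at hle
      norm_num at hle
      exact le_trans h1 hle
end

section
/- Let E be a real inner product space, w ∈ E with w ≠ 0, θ ∈ ℝ, b > 0, and x ∈ E with ⟪w, x⟫ < θ (a rejected agent). Define f : E → ℝ by f(z) = 1 if ⟪w, z⟫ ≥ θ and 0 otherwise, and let d(x) = (θ − ⟪w, x⟫)/‖w‖ > 0. If d(x) ≤ 1/√b, then the supremum of z ↦ f(z) − b·‖z − x‖² over E equals 1 − b·d(x)² ≥ 0 and is attained at the boundary point z* = x + ((θ − ⟪w, x⟫)/‖w‖²)·w, which satisfies ⟪w, z*⟫ = θ. If d(x) > 1/√b, then the supremum equals 0 and is attained at z = x. -/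
/-- best response of a rejected agent (`⟪w, x⟫ < θ`) against the
linear classifier `f(z) = 1(⟪w, z⟫ ≥ θ)` with quadratic cost `b ‖z - x‖²`.
With `d(x) = (θ - ⟪w, x⟫)/‖w‖ > 0`: if `d(x) ≤ 1/√b` the supremum of
`z ↦ f z - b ‖z - x‖²` equals `1 - b d(x)² ≥ 0` and is attained at the boundary
point `z* = x + ((θ - ⟪w, x⟫)/‖w‖²) • w`, which satisfies `⟪w, z*⟫ = θ`; if
`d(x) > 1/√b` the supremum equals `0` and is attained at `z = x`. -/
theorem stmt8 {E : Type*} [NormedAddCommGroup E] [InnerProductSpace ℝ E]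
    (w : E) (hw : w ≠ 0) (θ b : ℝ) (hb : 0 < b) (x : E)
    (hx : (inner ℝ w x : ℝ) < θ) :
    (0 < (θ - (inner ℝ w x : ℝ)) / ‖w‖) ∧
    ((θ - (inner ℝ w x : ℝ)) / ‖w‖ ≤ 1 / Real.sqrt b →
      (⨆ z : E, ((if (inner ℝ w z : ℝ) ≥ θ then (1 : ℝ) else 0) - b * ‖z - x‖ ^ 2)) =
          1 - b * ((θ - (inner ℝ w x : ℝ)) / ‖w‖) ^ 2 ∧
        0 ≤ 1 - b * ((θ - (inner ℝ w x : ℝ)) / ‖w‖) ^ 2 ∧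
        ((if (inner ℝ w (x + ((θ - (inner ℝ w x : ℝ)) / ‖w‖ ^ 2) • w) : ℝ) ≥ θ then (1 : ℝ) else 0)
            - b * ‖(x + ((θ - (inner ℝ w x : ℝ)) / ‖w‖ ^ 2) • w) - x‖ ^ 2) =
          1 - b * ((θ - (inner ℝ w x : ℝ)) / ‖w‖) ^ 2 ∧
        (inner ℝ w (x + ((θ - (inner ℝ w x : ℝ)) / ‖w‖ ^ 2) • w) : ℝ) = θ) ∧
    ((θ - (inner ℝ w x : ℝ)) / ‖w‖ > 1 / Real.sqrt b →
      (⨆ z : E, ((if (inner ℝ w z : ℝ) ≥ θ then (1 : ℝ) else 0) - b * ‖z - x‖ ^ 2)) = 0 ∧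
        ((if (inner ℝ w x : ℝ) ≥ θ then (1 : ℝ) else 0) - b * ‖x - x‖ ^ 2) = 0) := by
  have hnw : (0:ℝ) < ‖w‖ := norm_pos_iff.mpr hw
  set a : ℝ := θ - (inner ℝ w x : ℝ) with ha
  have hapos : 0 < a := by simp [ha]; linarith
  set d : ℝ := a / ‖w‖ with hd
  have hdpos : 0 < d := div_pos hapos hnw
  -- key: any accepted z is at distance ≥ d
  have hkey : ∀ z : E, (inner ℝ w z : ℝ) ≥ θ → d ≤ ‖z - x‖ := by
    intro z hz
    have h1 : a ≤ (inner ℝ w (z - x) : ℝ) := by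
      rw [inner_sub_right]; simp [ha]; linarith
    have h2 : (inner ℝ w (z - x) : ℝ) ≤ ‖w‖ * ‖z - x‖ := real_inner_le_norm w (z - x)
    rw [hd, div_le_iff₀ hnw, mul_comm]
    linarith
  -- inner product at z*
  have hzstar : (inner ℝ w (x + ((θ - (inner ℝ w x : ℝ)) / ‖w‖ ^ 2) • w) : ℝ) = θ := by
    rw [inner_add_right, real_inner_smul_right, real_inner_self_eq_norm_sq]
    field_simp
    ring
  have hznorm : ‖(x + ((θ - (inner ℝ w x : ℝ)) / ‖w‖ ^ 2) • w) - x‖ = d := by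
    have : (x + ((θ - (inner ℝ w x : ℝ)) / ‖w‖ ^ 2) • w) - x
        = ((θ - (inner ℝ w x : ℝ)) / ‖w‖ ^ 2) • w := by abel
    rw [this, norm_smul]
    rw [Real.norm_eq_abs, abs_of_pos (div_pos hapos (by positivity))]
    rw [hd, ha]
    field_simp
  have hbdd : BddAbove (Set.range fun z : E =>
      ((if (inner ℝ w z : ℝ) ≥ θ then (1 : ℝ) else 0) - b * ‖z - x‖ ^ 2)) := by
    refine ⟨1, ?_⟩
    rintro v ⟨z, rfl⟩
    have : 0 ≤ b * ‖z - x‖ ^ 2 := by positivity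
    dsimp only
    split_ifs <;> linarith
  refine ⟨hdpos, ?_, ?_⟩
  · intro hle
    have hbd2 : b * d ^ 2 ≤ 1 := by
      have hsb : 0 < Real.sqrt b := Real.sqrt_pos.mpr hb
      have h1 : d ^ 2 ≤ (1 / Real.sqrt b) ^ 2 := by
        apply sq_le_sq' <;> nlinarith
      have h2 : (1 / Real.sqrt b) ^ 2 = 1 / b := by
        rw [div_pow, one_pow, Real.sq_sqrt hb.le]
      rw [h2] at h1
      calc b * d ^ 2 ≤ b * (1 / b) := by nlinarith
        _ = 1 := by field_simp
    have hval : ((if (inner ℝ w (x + ((θ - (inner ℝ w x : ℝ)) / ‖w‖ ^ 2) • w) : ℝ) ≥ θ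
          then (1 : ℝ) else 0)
        - b * ‖(x + ((θ - (inner ℝ w x : ℝ)) / ‖w‖ ^ 2) • w) - x‖ ^ 2) = 1 - b * d ^ 2 := by
      rw [if_pos (le_of_eq hzstar.symm), hznorm]
    refine ⟨?_, by linarith, hval, hzstar⟩
    apply le_antisymm
    · apply ciSup_le
      intro z
      by_cases hz : (inner ℝ w z : ℝ) ≥ θ
      · have := hkey z hz
        have h2 : d ^ 2 ≤ ‖z - x‖ ^ 2 := by nlinarith
        rw [if_pos hz]
        nlinarith
      · rw [if_neg hz]
        have : 0 ≤ b * ‖z - x‖ ^ 2 := by positivity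
        linarith
    · calc (1 : ℝ) - b * d ^ 2 = _ := hval.symm
        _ ≤ _ := le_ciSup hbdd (x + ((θ - (inner ℝ w x : ℝ)) / ‖w‖ ^ 2) • w)
  · intro hgt
    have hsb : 0 < Real.sqrt b := Real.sqrt_pos.mpr hb
    have hbd2 : 1 < b * d ^ 2 := by
      have h2 : (1 / Real.sqrt b) ^ 2 = 1 / b := by
        rw [div_pow, one_pow, Real.sq_sqrt hb.le]
      have hq : 0 < 1 / Real.sqrt b := by positivity
      have h1 : (1 / Real.sqrt b) ^ 2 < d ^ 2 := by nlinarith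
      rw [h2] at h1
      calc (1:ℝ) = b * (1 / b) := by field_simp
        _ < b * d ^ 2 := by nlinarith
    have hatx : ((if (inner ℝ w x : ℝ) ≥ θ then (1 : ℝ) else 0) - b * ‖x - x‖ ^ 2) = 0 := by
      rw [if_neg (not_le.mpr hx), sub_self, norm_zero]
      ring
    refine ⟨?_, hatx⟩
    apply le_antisymm
    · apply ciSup_le
      intro z
      by_cases hz : (inner ℝ w z : ℝ) ≥ θ
      · have := hkey z hz
        have h2 : d ^ 2 ≤ ‖z - x‖ ^ 2 := by nlinarith
        rw [if_pos hz]
        nlinarith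
      · rw [if_neg hz]
        have : 0 ≤ b * ‖z - x‖ ^ 2 := by positivity
        linarith
    · calc (0:ℝ) = _ := hatx.symm
        _ ≤ _ := le_ciSup hbdd x
end
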